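/- Let N ≥ 1 and let A₁, A₂ be N×N complex matrices. Define E : ℂ → M_N(ℂ) by E(z) = (arctan(|z|)/|z|) · ( (Re z)·A₂ + (Im z)·A₁ ) for z ≠ 0 and E(0) = 0. Then E is real-analytic on all of ℂ (regarded as a map from ℝ² to the real vector space of N×N complex matrices). -/

import Mathlib

attribute [local instance] Matrix.normedAddCommGroup Matrix.normedSpace

open Complex

/-- Coefficients of the power series for `arctan x / x` in the variable `x ^ 2`. -/
noncomputable def arctanAuxCoeff : ℕ → ℝ := fun n => (-1) ^ n / (2 * n + 1)

/-- The power series `∑ (-1)^n u^n / (2n+1)`. -/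
noncomputable def arctanAuxSeries : FormalMultilinearSeries ℝ ℝ ℝ :=
  FormalMultilinearSeries.ofScalars ℝ arctanAuxCoeff

/-- The sum of the auxiliary series. -/
noncomputable def arctanAuxF : ℝ → ℝ := arctanAuxSeries.sum

lemma arctanAuxCoeff_abs_le (n : ℕ) : ‖arctanAuxCoeff n‖ ≤ 1 := by
  rw [arctanAuxCoeff, Real.norm_eq_abs, abs_div, _root_.abs_pow, abs_neg, abs_one, one_pow]
  rw [div_le_one (by positivity)]
  rw [_root_.abs_of_nonneg (by positivity)]
  norm_num

lemma arctanAuxSeries_radius : 1 ≤ arctanAuxSeries.radius := by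
  apply FormalMultilinearSeries.le_radius_of_bound _ 1
  intro n
  rw [arctanAuxSeries, FormalMultilinearSeries.ofScalars_norm]
  simpa using arctanAuxCoeff_abs_le n

lemma arctanAuxF_hasSum {u : ℝ} (hu : |u| < 1) :
    HasSum (fun n => arctanAuxCoeff n • u ^ n) (arctanAuxF u) := by
  have hmem : u ∈ Metric.eball (0 : ℝ) arctanAuxSeries.radius := by
    rw [mem_emetric_ball_zero_iff]
    refine lt_of_lt_of_le ?_ arctanAuxSeries_radius
    refine ENNReal.coe_lt_one_iff.mpr ?_
    rw [← NNReal.coe_lt_one]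
    simpa [Real.norm_eq_abs] using hu
  have h := arctanAuxSeries.hasSum hmem
  refine HasSum.congr_fun h fun n => ?_
  rw [arctanAuxSeries, FormalMultilinearSeries.ofScalars_apply_eq]

lemma arctanAuxF_zero : arctanAuxF 0 = 1 := by
  have h := arctanAuxF_hasSum (u := 0) (by norm_num)
  have h' : HasSum (fun n => arctanAuxCoeff n • (0:ℝ) ^ n) 1 := by
    have := hasSum_single (f := fun n => arctanAuxCoeff n • (0:ℝ) ^ n) 0
      (by intro b hb; simp [zero_pow hb])
    simpa [arctanAuxCoeff] using this
  exact (h.unique h')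

lemma arctanAuxF_sq {x : ℝ} (hx0 : 0 < x) (hx1 : x < 1) :
    arctanAuxF (x ^ 2) = Real.arctan x / x := by
  have hxx : |x ^ 2| < 1 := by
    rw [_root_.abs_of_nonneg (by positivity)]
    nlinarith
  have h1 := arctanAuxF_hasSum hxx
  have h2 := Real.hasSum_arctan (x := x)
    (by rw [Real.norm_eq_abs, _root_.abs_of_pos hx0]; exact hx1)
  have h3 : HasSum (fun n : ℕ => x * (arctanAuxCoeff n • (x ^ 2) ^ n)) (Real.arctan x) := by
    refine h2.congr_fun fun n => ?_
    rw [arctanAuxCoeff, smul_eq_mul, ← pow_mul]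
    push_cast
    rw [pow_succ' x, pow_mul]
    ring_nf
  have h4 := h1.mul_left x
  have := h3.unique h4
  rw [eq_div_iff hx0.ne', mul_comm]
  exact this.symm

lemma arctanAuxF_analyticAt : AnalyticAt ℝ arctanAuxF 0 := by
  have h := arctanAuxSeries.hasFPowerSeriesOnBall
    (lt_of_lt_of_le (by norm_num) arctanAuxSeries_radius)
  exact h.analyticAt

lemma one_sub_mul_I_ne_zero (x : ℝ) : (1 : ℂ) - (x : ℂ) * I ≠ 0 := by
  intro h
  have h1 : ((1 : ℂ) - (x : ℂ) * I).re = 1 := by simp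
  rw [h] at h1
  simp at h1

lemma div_slit (x : ℝ) : ((1 : ℂ) + (x : ℂ) * I) / (1 - (x : ℂ) * I) ∈ Complex.slitPlane := by
  rw [Complex.mem_slitPlane_iff]
  rcases eq_or_ne x 0 with hx | hx
  · left
    simp [hx]
  · right
    rw [Complex.div_im]
    simp only [Complex.normSq_apply]
    simp
    have h1 : (0:ℝ) < 1 + x * x := by nlinarith
    intro h
    apply hx
    rw [div_sub_div _ _ h1.ne' h1.ne'] at h
    rw [div_eq_zero_iff] at h
    rcases h with h | h
    · nlinarith
    · nlinarith

lemma analyticAt_arctan_real (x : ℝ) : AnalyticAt ℂ Complex.arctan (x : ℂ) := by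
  have harc : Complex.arctan = fun w : ℂ => -I / 2 * Complex.log ((1 + w * I) / (1 - w * I)) :=
    rfl
  rw [harc]
  have hnum : AnalyticAt ℂ (fun w : ℂ => 1 + w * I) (x : ℂ) :=
    analyticAt_const.add (analyticAt_id.mul analyticAt_const)
  have hden : AnalyticAt ℂ (fun w : ℂ => 1 - w * I) (x : ℂ) :=
    analyticAt_const.sub (analyticAt_id.mul analyticAt_const)
  exact analyticAt_const.mul ((hnum.div hden (one_sub_mul_I_ne_zero x)).clog (div_slit x))

/-- The scalar factor of `E`, extended by `1` at `0`. -/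
noncomputable def arctanScalar : ℂ → ℝ := fun z =>
  if z = 0 then 1 else Real.arctan ‖z‖ / ‖z‖

lemma analyticAt_normSq (z : ℂ) : AnalyticAt ℝ (fun w : ℂ => Complex.normSq w) z := by
  have h : (fun w : ℂ => Complex.normSq w) = fun w : ℂ => w.re * w.re + w.im * w.im := by
    funext w
    rw [Complex.normSq_apply]
  rw [h]
  exact ((Complex.reCLM.analyticAt z).mul (Complex.reCLM.analyticAt z)).add
    ((Complex.imCLM.analyticAt z).mul (Complex.imCLM.analyticAt z))

lemma arctanScalar_analyticAt_zero : AnalyticAt ℝ arctanScalar 0 := by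
  have h0 : Complex.normSq (0 : ℂ) = 0 := by simp
  have h : AnalyticAt ℝ (fun z : ℂ => arctanAuxF (Complex.normSq z)) 0 := by
    refine AnalyticAt.comp ?_ (analyticAt_normSq 0)
    rw [h0]
    exact arctanAuxF_analyticAt
  refine h.congr ?_
  filter_upwards [Metric.ball_mem_nhds (0:ℂ) one_pos] with z hz
  rcases eq_or_ne z 0 with rfl | hz0
  · simp [arctanScalar, arctanAuxF_zero]
  · have hzpos : 0 < ‖z‖ := norm_pos_iff.mpr hz0
    have hz1 : ‖z‖ < 1 := by
      rw [Metric.mem_ball, dist_zero_right] at hz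
      exact hz
    have ht : Complex.normSq z = ‖z‖ ^ 2 := (Complex.sq_norm z).symm
    rw [ht, arctanAuxF_sq hzpos hz1, arctanScalar, if_neg hz0]

lemma arctanScalar_analyticAt_ne {z₀ : ℂ} (hz : z₀ ≠ 0) : AnalyticAt ℝ arctanScalar z₀ := by
  set t₀ : ℝ := Complex.normSq z₀ with ht₀def
  have ht₀ : 0 < t₀ := Complex.normSq_pos.mpr hz
  have hslit : ((t₀ : ℝ) : ℂ) ∈ Complex.slitPlane := by
    rw [Complex.mem_slitPlane_iff]
    left
    simpa using ht₀
  have hlog : AnalyticAt ℂ (fun w : ℂ => Complex.exp (Complex.log w / 2)) ((t₀ : ℝ) : ℂ) :=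
    ((analyticAt_clog hslit).div analyticAt_const two_ne_zero).cexp
  have hval : Complex.exp (Complex.log ((t₀ : ℝ) : ℂ) / 2)
      = ((Real.exp (Real.log t₀ / 2) : ℝ) : ℂ) := by
    rw [Complex.ofReal_exp, ← Complex.ofReal_log ht₀.le]
    push_cast
    rfl
  have harct : AnalyticAt ℂ Complex.arctan ((Real.exp (Real.log t₀ / 2) : ℝ) : ℂ) :=
    analyticAt_arctan_real _
  have hnum : AnalyticAt ℂ
      (fun w : ℂ => Complex.arctan (Complex.exp (Complex.log w / 2))) ((t₀ : ℝ) : ℂ) := by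
    have := AnalyticAt.comp (𝕜 := ℂ) (g := Complex.arctan)
      (f := fun w : ℂ => Complex.exp (Complex.log w / 2)) (x := ((t₀ : ℝ) : ℂ))
      (by rw [hval]; exact harct) hlog
    exact this
  have hΦ : AnalyticAt ℂ
      (fun w : ℂ => Complex.arctan (Complex.exp (Complex.log w / 2))
        / Complex.exp (Complex.log w / 2)) ((t₀ : ℝ) : ℂ) :=
    hnum.div hlog (Complex.exp_ne_zero _)
  have hchain : AnalyticAt ℝ
      (fun z : ℂ => (Complex.arctan (Complex.exp (Complex.log ((Complex.normSq z : ℝ) : ℂ) / 2))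
        / Complex.exp (Complex.log ((Complex.normSq z : ℝ) : ℂ) / 2)).re) z₀ := by
    have hinner : AnalyticAt ℝ (fun z : ℂ => ((Complex.normSq z : ℝ) : ℂ)) z₀ :=
      (Complex.ofRealCLM.analyticAt _).comp (analyticAt_normSq z₀)
    have hmid := AnalyticAt.comp (𝕜 := ℝ)
      (g := fun w : ℂ => Complex.arctan (Complex.exp (Complex.log w / 2))
        / Complex.exp (Complex.log w / 2))
      (f := fun z : ℂ => ((Complex.normSq z : ℝ) : ℂ)) (x := z₀)
      hΦ.restrictScalars hinner
    exact AnalyticAt.comp (𝕜 := ℝ) (g := fun w : ℂ => w.re) (x := z₀)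
      (Complex.reCLM.analyticAt _) hmid
  refine hchain.congr ?_
  filter_upwards [isOpen_compl_singleton.mem_nhds (by simpa using hz)] with z hz0
  have hz0' : z ≠ 0 := by simpa using hz0
  have hzpos : 0 < ‖z‖ := norm_pos_iff.mpr hz0'
  have htpos : 0 < Complex.normSq z := Complex.normSq_pos.mpr hz0'
  have hlogt : Real.log (Complex.normSq z) / 2 = Real.log ‖z‖ := by
    rw [← Complex.sq_norm z, Real.log_pow]
    push_cast
    ring
  have hv : Complex.exp (Complex.log ((Complex.normSq z : ℝ) : ℂ) / 2)
      = ((‖z‖ : ℝ) : ℂ) := by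
    have : Complex.log ((Complex.normSq z : ℝ) : ℂ)
        = ((Real.log (Complex.normSq z) : ℝ) : ℂ) := (Complex.ofReal_log htpos.le).symm
    rw [this]
    rw [show (((Real.log (Complex.normSq z) : ℝ) : ℂ) / 2)
        = (((Real.log (Complex.normSq z) / 2 : ℝ)) : ℂ) by push_cast; ring]
    rw [hlogt, ← Complex.ofReal_exp, Real.exp_log hzpos]
  rw [hv, ← Complex.ofReal_arctan, ← Complex.ofReal_div, Complex.ofReal_re,
    arctanScalar, if_neg hz0']

/-- Let `N ≥ 1` and let `A₁, A₂` be `N × N` complex matrices.  Define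
`E : ℂ → M_N(ℂ)` by `E z = (arctan |z| / |z|) • ((Re z) • A₂ + (Im z) • A₁)` for `z ≠ 0`
and `E 0 = 0`.  Then `E` is real-analytic on all of `ℂ` (viewed as a map of real
normed vector spaces). -/
theorem E_real_analytic
    (N : ℕ) (hN : 1 ≤ N) (A₁ A₂ : Matrix (Fin N) (Fin N) ℂ)
    (E : ℂ → Matrix (Fin N) (Fin N) ℂ)
    (hE : ∀ z : ℂ, z ≠ 0 →
      E z = (Real.arctan ‖z‖ / ‖z‖) • (z.re • A₂ + z.im • A₁))
    (hE0 : E 0 = 0) :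
    AnalyticOnNhd ℝ E Set.univ := by
  have hEeq : E = fun z => arctanScalar z • (z.re • A₂ + z.im • A₁) := by
    funext z
    rcases eq_or_ne z 0 with rfl | hz
    · simp [hE0, arctanScalar]
    · rw [hE z hz, arctanScalar, if_neg hz]
  rw [hEeq]
  intro z _
  have hc : AnalyticAt ℝ arctanScalar z := by
    rcases eq_or_ne z 0 with rfl | hz
    · exact arctanScalar_analyticAt_zero
    · exact arctanScalar_analyticAt_ne hz
  exact hc.smul (((Complex.reCLM.analyticAt z).smul analyticAt_const).add
    ((Complex.imCLM.analyticAt z).smul analyticAt_const))
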